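/- (Theorem 1, Price of Anarchy bound.) Let M = {1,…,m} and W = {1,…,n} be finite sets, w : M × W → [0,1], and for each i ∈ M let q_i satisfy (A1) q_i(0) = q_i(1) = 0, (A2) q_i twice differentiable on [0,1], (A3) q_i strictly concave on [0,1], with h := min_i q_i'(0) > 0 and H := max_i q_i'(0); set π_i(u) = q_i(u)/(1 + q_i(u)). For c ∈ (0,h) let ū_i(c) ∈ (0,1) be the unique solution of q_i'(u)/(1 + q_i(u))² = c and L(c) := min_i ū_i(c), and let c* ∈ (0,h) be the unique solution of c = (H/2)·L(c). Call x : M × W → ℝ feasible if x ≥ 0 with all row sums and column sums at most 1, and write u_i(x) = ∑_{j∈W} w_{ij} x_{ij}. If x* is feasible and maximizes ∑_i u_i(x) over feasible x, and x̂ is feasible and maximizes ∑_i π_i(u_i(x)) over feasible x, then ∑_i u_i(x̂) ≥ (L(c*)/2)·∑_i u_i(x*). -/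

import Mathlib

open Filter Set Topology

lemma deriv_nonpos_of_right_max {f : ℝ → ℝ} {d : ℝ} (hf : HasDerivAt f d 0)
    (h : ∀ t ∈ Set.Ioc (0:ℝ) 1, f t ≤ f 0) : d ≤ 0 := by
  have hs : Tendsto (slope f 0) (𝓝[>] 0) (𝓝 d) :=
    (hasDerivAt_iff_tendsto_slope.mp hf).mono_left
      (nhdsWithin_mono _ (fun x hx => ne_of_gt hx))
  refine le_of_tendsto hs ?_
  filter_upwards [Ioc_mem_nhdsGT_of_mem (by constructor <;> norm_num : (0:ℝ) ∈ Set.Ico 0 1)] with t ht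
  have h1 : f t - f 0 ≤ 0 := sub_nonpos.mpr (h t ht)
  have h2 : (f t - f 0) / t ≤ 0 := div_nonpos_of_nonpos_of_nonneg h1 ht.1.le
  simpa [slope, div_eq_inv_mul] using h2

lemma tangent_le {f : ℝ → ℝ} {x y px : ℝ} (hf : HasDerivAt f px x)
    (hconc : ∀ t ∈ Set.Icc (0:ℝ) 1, (1-t) * f x + t * f y ≤ f (x + t*(y-x))) :
    f y ≤ f x + px * (y - x) := by
  have ha : HasDerivAt (fun t : ℝ => x + t*(y-x)) (y-x) 0 := by
    simpa using ((hasDerivAt_id (0:ℝ)).mul_const (y-x)).const_add x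
  have hf' : HasDerivAt f px ((fun t : ℝ => x + t*(y-x)) 0) := by simpa using hf
  have hcomp : HasDerivAt (fun t : ℝ => f (x + t*(y-x))) (px * (y-x)) 0 := hf'.comp 0 ha
  have hlin : HasDerivAt (fun t : ℝ => f x + t * (f y - f x)) (f y - f x) 0 := by
    simpa using ((hasDerivAt_id (0:ℝ)).mul_const (f y - f x)).const_add (f x)
  have hg : HasDerivAt (fun t : ℝ => f x + t * (f y - f x) - f (x + t*(y-x)))
      ((f y - f x) - px * (y-x)) 0 := hlin.sub hcomp
  have hkey := deriv_nonpos_of_right_max hg ?_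
  · linarith
  · intro t ht
    have h1 := hconc t ⟨ht.1.le, ht.2⟩
    simp only [zero_mul, add_zero]
    linarith

lemma deriv_antitone_of_concave {f : ℝ → ℝ}
    (hconc : ConcaveOn ℝ (Set.Icc (0:ℝ) 1) f) {x y px py : ℝ}
    (hx : x ∈ Set.Icc (0:ℝ) 1) (hy : y ∈ Set.Icc (0:ℝ) 1) (hxy : x ≤ y)
    (hfx : HasDerivAt f px x) (hfy : HasDerivAt f py y) : py ≤ px := by
  rcases eq_or_lt_of_le hxy with rfl | hlt
  · exact le_of_eq (hfy.unique hfx)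
  have pair : ∀ (u v : ℝ), u ∈ Set.Icc (0:ℝ) 1 → v ∈ Set.Icc (0:ℝ) 1 →
      ∀ t ∈ Set.Icc (0:ℝ) 1, (1-t) * f u + t * f v ≤ f (u + t*(v-u)) := by
    intro u v hu hv t ht
    have := hconc.2 hu hv (by linarith [ht.2] : (0:ℝ) ≤ 1 - t) ht.1 (by ring)
    simpa [smul_eq_mul, show (1-t)*u + t*v = u + t*(v-u) from by ring] using this
  have t1 := tangent_le hfx (pair x y hx hy)
  have t2 := tangent_le hfy (pair y x hy hx)
  nlinarith [t1, t2, hlt]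

lemma quot_concave {g : ℝ → ℝ} (hconc : ConcaveOn ℝ (Set.Icc (0:ℝ) 1) g)
    (hnn : ∀ u ∈ Set.Icc (0:ℝ) 1, 0 ≤ g u) :
    ConcaveOn ℝ (Set.Icc (0:ℝ) 1) (fun u => g u / (1 + g u)) := by
  refine ⟨convex_Icc 0 1, ?_⟩
  intro x hx y hy a b ha hb hab
  obtain rfl : b = 1 - a := by linarith
  have hs : 0 ≤ g x := hnn x hx
  have ht : 0 ≤ g y := hnn y hy
  have hmem : a • x + (1-a) • y ∈ Set.Icc (0:ℝ) 1 :=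
    (convex_Icc (0:ℝ) 1) hx hy ha hb hab
  have hmem' : a * x + (1-a) * y ∈ Set.Icc (0:ℝ) 1 := by simpa [smul_eq_mul] using hmem
  have hm : a * g x + (1-a) * g y ≤ g (a * x + (1-a) * y) := by
    simpa [smul_eq_mul] using hconc.2 hx hy ha hb hab
  have hm0 : 0 ≤ g (a * x + (1-a) * y) := hnn _ hmem'
  have h1 : (0:ℝ) < 1 + g x := by linarith
  have h2 : (0:ℝ) < 1 + g y := by linarith
  have hw0 : (0:ℝ) ≤ a * g x + (1-a) * g y := by positivity
  have h3 : (0:ℝ) < 1 + (a * g x + (1-a) * g y) := by linarith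
  have h4 : (0:ℝ) < 1 + g (a * x + (1-a) * y) := by linarith
  have key1 : a * (g x/(1+g x)) + (1-a) * (g y/(1+g y))
      ≤ (a * g x + (1-a) * g y) / (1+(a * g x + (1-a) * g y)) := by
    rw [← sub_nonneg]
    have expand : (a * g x + (1-a) * g y) / (1+(a * g x + (1-a) * g y))
        - (a * (g x/(1+g x)) + (1-a) * (g y/(1+g y)))
        = (a*(1-a)*(g x - g y)^2) / ((1+(a * g x + (1-a) * g y))*(1+g x)*(1+g y)) := by
      field_simp
      ring
    rw [expand]; positivity
  have key2 : (a * g x + (1-a) * g y) / (1+(a * g x + (1-a) * g y))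
      ≤ g (a * x + (1-a) * y) / (1 + g (a * x + (1-a) * y)) := by
    rw [div_le_div_iff₀ h3 h4]; nlinarith [hm]
  simp only [smul_eq_mul]
  linarith [key1, key2]

theorem price_of_anarchy_bound {ι κ : Type*} [Fintype ι] [Fintype κ] [Nonempty ι]
    (w : ι → κ → ℝ) (hw : ∀ i j, w i j ∈ Set.Icc (0:ℝ) 1)
    (q : ι → ℝ → ℝ)
    (hq0 : ∀ i, q i 0 = 0) (hq1 : ∀ i, q i 1 = 0)
    (hq2 : ∀ i, ∀ u ∈ Set.Icc (0:ℝ) 1,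
      DifferentiableAt ℝ (q i) u ∧ DifferentiableAt ℝ (deriv (q i)) u)
    (hqc : ∀ i, StrictConcaveOn ℝ (Set.Icc (0:ℝ) 1) (q i))
    (h H : ℝ)
    (hdef : h = Finset.univ.inf' Finset.univ_nonempty (fun i => deriv (q i) 0))
    (hHdef : H = Finset.univ.sup' Finset.univ_nonempty (fun i => deriv (q i) 0))
    (hpos : 0 < h)
    (π : ι → ℝ → ℝ) (hπ : ∀ i u, π i u = q i u / (1 + q i u))
    (ubar : ι → ℝ → ℝ)
    (hubar : ∀ i, ∀ c ∈ Set.Ioo (0:ℝ) h,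
      ubar i c ∈ Set.Ioo (0:ℝ) 1 ∧
      deriv (q i) (ubar i c) / (1 + q i (ubar i c)) ^ 2 = c ∧
      ∀ u ∈ Set.Ioo (0:ℝ) 1, deriv (q i) u / (1 + q i u) ^ 2 = c → u = ubar i c)
    (L : ℝ → ℝ)
    (hL : ∀ c, L c = Finset.univ.inf' Finset.univ_nonempty (fun i => ubar i c))
    (cstar : ℝ) (hcstar : cstar ∈ Set.Ioo (0:ℝ) h) (hceq : cstar = H / 2 * L cstar)
    (feasible : (ι → κ → ℝ) → Prop)
    (hfeasible : ∀ x, feasible x ↔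
      (∀ i j, 0 ≤ x i j) ∧ (∀ i, ∑ j, x i j ≤ 1) ∧ (∀ j, ∑ i, x i j ≤ 1))
    (util : (ι → κ → ℝ) → ι → ℝ)
    (hutil : ∀ x i, util x i = ∑ j, w i j * x i j)
    (xstar : ι → κ → ℝ) (hxstar_feas : feasible xstar)
    (hxstar_opt : ∀ x, feasible x → ∑ i, util x i ≤ ∑ i, util xstar i)
    (xhat : ι → κ → ℝ) (hxhat_feas : feasible xhat)
    (hxhat_opt : ∀ x, feasible x → ∑ i, π i (util x i) ≤ ∑ i, π i (util xhat i)) :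
    ∑ i, util xhat i ≥ L cstar / 2 * ∑ i, util xstar i := by
  obtain ⟨hx0, hxr, hxc⟩ := (hfeasible xhat).mp hxhat_feas
  obtain ⟨hs0, hsr, hsc⟩ := (hfeasible xstar).mp hxstar_feas
  -- utilities lie in [0,1]
  have hub : ∀ (x : ι → κ → ℝ), (∀ i j, 0 ≤ x i j) → (∀ i, ∑ j, x i j ≤ 1) →
      ∀ i, util x i ∈ Set.Icc (0:ℝ) 1 := by
    intro x h0 hr i
    rw [hutil]
    constructor
    · exact Finset.sum_nonneg fun j _ => mul_nonneg (hw i j).1 (h0 i j)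
    · calc ∑ j, w i j * x i j ≤ ∑ j, x i j := by
            refine Finset.sum_le_sum fun j _ => ?_
            nlinarith [(hw i j).1, (hw i j).2, h0 i j]
        _ ≤ 1 := hr i
  have huhat : ∀ i, util xhat i ∈ Set.Icc (0:ℝ) 1 := hub xhat hx0 hxr
  have hustar : ∀ i, util xstar i ∈ Set.Icc (0:ℝ) 1 := hub xstar hs0 hsr
  -- q is nonnegative on [0,1]
  have hqnn : ∀ i, ∀ u ∈ Set.Icc (0:ℝ) 1, 0 ≤ q i u := by
    intro i u hu
    have h2 := (hqc i).concaveOn.2 (show (0:ℝ) ∈ Set.Icc (0:ℝ) 1 by norm_num)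
      (show (1:ℝ) ∈ Set.Icc (0:ℝ) 1 by norm_num)
      (show (0:ℝ) ≤ 1 - u by linarith [hu.2]) hu.1 (by ring)
    simpa [hq0 i, hq1 i, smul_eq_mul] using h2
  have hq1pos : ∀ i, ∀ u ∈ Set.Icc (0:ℝ) 1, (0:ℝ) < 1 + q i u := by
    intro i u hu; linarith [hqnn i u hu]
  -- derivative of π
  have hπd : ∀ i, ∀ u ∈ Set.Icc (0:ℝ) 1,
      HasDerivAt (π i) (deriv (q i) u / (1 + q i u) ^ 2) u := by
    intro i u hu
    have hq' : HasDerivAt (q i) (deriv (q i) u) u := (hq2 i u hu).1.hasDerivAt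
    have hne : (1 + q i u) ≠ 0 := (hq1pos i u hu).ne'
    have hdiv := hq'.div ((hasDerivAt_const u (1:ℝ)).add hq') hne
    have heq : (fun v => q i v / (1 + q i v)) = π i := by
      funext v; rw [hπ]
    change HasDerivAt (fun v => q i v / (1 + q i v))
      ((deriv (q i) u * (1 + q i u) - q i u * (0 + deriv (q i) u)) / (1 + q i u) ^ 2) u at hdiv
    rw [heq] at hdiv
    convert hdiv using 1
    field_simp
    ring
  -- π is concave
  have hπc : ∀ i, ConcaveOn ℝ (Set.Icc (0:ℝ) 1) (π i) := by
    intro i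
    have heq : π i = fun u => q i u / (1 + q i u) := funext (hπ i)
    rw [heq]
    exact quot_concave (hqc i).concaveOn (hqnn i)
  -- derivative comparison
  have hmono : ∀ i, ∀ x ∈ Set.Icc (0:ℝ) 1, ∀ y ∈ Set.Icc (0:ℝ) 1, x ≤ y →
      deriv (q i) y / (1 + q i y) ^ 2 ≤ deriv (q i) x / (1 + q i x) ^ 2 := by
    intro i x hx y hy hxy
    exact deriv_antitone_of_concave (hπc i) hx hy hxy (hπd i x hx) (hπd i y hy)
  -- facts about ubar, L, H
  have hH : 0 < H := by
    rcases (exists_true_iff_nonempty.mpr ‹Nonempty ι›) with ⟨i0, _⟩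
    calc (0:ℝ) < h := hpos
      _ ≤ deriv (q i0) 0 := by
          rw [hdef]; exact Finset.inf'_le (fun i => deriv (q i) 0) (Finset.mem_univ i0)
      _ ≤ H := by
          rw [hHdef]; exact Finset.le_sup' (fun i => deriv (q i) 0) (Finset.mem_univ i0)
  have hubar' := fun i => hubar i cstar hcstar
  have hLle : ∀ i, L cstar ≤ ubar i cstar := by
    intro i; rw [hL]; exact Finset.inf'_le _ (Finset.mem_univ i)
  have hLlt1 : L cstar ≤ 1 := by
    rcases (exists_true_iff_nonempty.mpr ‹Nonempty ι›) with ⟨i0, _⟩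
    exact le_trans (hLle i0) (hubar' i0).1.2.le
  have hcH : cstar ≤ H / 2 := by
    rw [hceq]; nlinarith [hH, hLlt1]
  have hq0H : ∀ i, deriv (q i) 0 ≤ H := by
    intro i; rw [hHdef]; exact Finset.le_sup' (fun i => deriv (q i) 0) (Finset.mem_univ i)
  -- the truncated matching
  obtain ⟨xt, hxt⟩ : ∃ xt : ι → κ → ℝ,
      xt = fun i j => if ubar i cstar ≤ util xhat i then 0 else xstar i j := ⟨_, rfl⟩
  have hxt0 : ∀ i j, 0 ≤ xt i j := by
    intro i j; rw [hxt]; dsimp only; split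
    · exact le_refl 0
    · exact hs0 i j
  have hxtr : ∀ i, ∑ j, xt i j ≤ 1 := by
    intro i; rw [hxt]; dsimp only; split
    · simp
    · exact hsr i
  have hxtc : ∀ j, ∑ i, xt i j ≤ 1 := by
    intro j
    calc ∑ i, xt i j ≤ ∑ i, xstar i j := by
          refine Finset.sum_le_sum fun i _ => ?_
          rw [hxt]; dsimp only; split
          · exact hs0 i j
          · exact le_refl _
      _ ≤ 1 := hsc j
  have hut : ∀ i, util xt i = if ubar i cstar ≤ util xhat i then 0 else util xstar i := by
    intro i
    by_cases hc : ubar i cstar ≤ util xhat i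
    · rw [if_pos hc, hutil]
      rw [Finset.sum_eq_zero]
      intro j _; rw [hxt]; dsimp only; rw [if_pos hc, mul_zero]
    · rw [if_neg hc, hutil, hutil]
      refine Finset.sum_congr rfl fun j _ => ?_
      rw [hxt]; dsimp only; rw [if_neg hc]
  have hutmem : ∀ i, util xt i ∈ Set.Icc (0:ℝ) 1 := hub xt hxt0 hxtr
  -- abbreviations
  obtain ⟨P, hP⟩ : ∃ P : ι → ℝ,
      ∀ i, P i = deriv (q i) (util xhat i) / (1 + q i (util xhat i)) ^ 2 :=
    ⟨_, fun i => rfl⟩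
  obtain ⟨d, hd⟩ : ∃ d : ι → ℝ, ∀ i, d i = util xt i - util xhat i := ⟨_, fun i => rfl⟩
  -- first-order condition
  have hfoc : ∑ i, P i * d i ≤ 0 := by
    have hg : HasDerivAt (fun t : ℝ => ∑ i, π i (util xhat i + t * d i))
        (∑ i, P i * d i) 0 := by
      refine HasDerivAt.fun_sum fun i _ => ?_
      have haff : HasDerivAt (fun t : ℝ => util xhat i + t * d i) (d i) 0 := by
        simpa using ((hasDerivAt_id (0:ℝ)).mul_const (d i)).const_add (util xhat i)
      have hpi : HasDerivAt (π i) (P i) ((fun t : ℝ => util xhat i + t * d i) 0) := by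
        rw [hP]
        simpa using hπd i (util xhat i) (huhat i)
      exact hpi.comp 0 haff
    refine deriv_nonpos_of_right_max hg ?_
    intro t ht
    simp only [zero_mul, add_zero]
    obtain ⟨y, hy⟩ : ∃ y : ι → κ → ℝ,
        y = fun i j => (1 - t) * xhat i j + t * xt i j := ⟨_, rfl⟩
    have hyfeas : feasible y := by
      rw [hfeasible]
      refine ⟨?_, ?_, ?_⟩
      · intro i j; rw [hy]; dsimp only
        have := hx0 i j; have := hxt0 i j
        nlinarith [ht.1, ht.2]
      · intro i; rw [hy]; dsimp only
        rw [Finset.sum_add_distrib, ← Finset.mul_sum, ← Finset.mul_sum]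
        nlinarith [hxr i, hxtr i, ht.1, ht.2, Finset.sum_nonneg (fun j (_ : j ∈ Finset.univ) => hx0 i j), Finset.sum_nonneg (fun j (_ : j ∈ Finset.univ) => hxt0 i j)]
      · intro j; rw [hy]; dsimp only
        rw [Finset.sum_add_distrib, ← Finset.mul_sum, ← Finset.mul_sum]
        nlinarith [hxc j, hxtc j, ht.1, ht.2, Finset.sum_nonneg (fun i (_ : i ∈ Finset.univ) => hx0 i j), Finset.sum_nonneg (fun i (_ : i ∈ Finset.univ) => hxt0 i j)]
    have hyutil : ∀ i, util y i = util xhat i + t * d i := by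
      intro i
      rw [hutil, hd]
      have : ∀ j, w i j * y i j
          = (1-t) * (w i j * xhat i j) + t * (w i j * xt i j) := by
        intro j; rw [hy]; dsimp only; ring
      rw [Finset.sum_congr rfl fun j _ => this j, Finset.sum_add_distrib,
        ← Finset.mul_sum, ← Finset.mul_sum, ← hutil, ← hutil]
      ring
    have := hxhat_opt y hyfeas
    calc ∑ i, π i (util xhat i + t * d i) = ∑ i, π i (util y i) :=
          Finset.sum_congr rfl fun i _ => by rw [hyutil i]
      _ ≤ ∑ i, π i (util xhat i) := this
  -- the key inequality
  have key : cstar * ∑ i, util xstar i ≤ H * ∑ i, util xhat i := by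
    have claim : ∀ i, cstar * util xstar i
        ≤ H * util xhat i - P i * util xhat i + P i * util xt i := by
      intro i
      have hP' := hP i
      have hubar_mem : ubar i cstar ∈ Set.Icc (0:ℝ) 1 :=
        ⟨(hubar' i).1.1.le, (hubar' i).1.2.le⟩
      have hpd_ubar : deriv (q i) (ubar i cstar) / (1 + q i (ubar i cstar)) ^ 2 = cstar :=
        (hubar' i).2.1
      by_cases hA : ubar i cstar ≤ util xhat i
      · -- case A : selfish utility already large
        have hutz : util xt i = 0 := by rw [hut i, if_pos hA]
        have hPle : P i ≤ cstar := by
          rw [hP', ← hpd_ubar]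
          exact hmono i _ hubar_mem _ (huhat i) hA
        have h1 : cstar * util xstar i ≤ cstar := by
          nlinarith [hcstar.1, (hustar i).2, (hustar i).1]
        have h2 : cstar ≤ H / 2 * util xhat i := by
          rw [hceq]
          have : L cstar ≤ util xhat i := le_trans (hLle i) hA
          nlinarith [hH]
        have h3 : P i * util xhat i ≤ H / 2 * util xhat i := by
          have : P i ≤ H / 2 := le_trans hPle hcH
          nlinarith [(huhat i).1]
        rw [hutz]
        nlinarith
      · -- case B : selfish utility small, marginal value large
        have hutz : util xt i = util xstar i := by rw [hut i, if_neg hA]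
        push_neg at hA
        have hPge : cstar ≤ P i := by
          rw [hP', ← hpd_ubar]
          exact hmono i _ (huhat i) _ hubar_mem hA.le
        have hPleH : P i ≤ H := by
          have h0mem : (0:ℝ) ∈ Set.Icc (0:ℝ) 1 := by norm_num
          have := hmono i 0 h0mem _ (huhat i) (huhat i).1
          rw [hP']
          calc deriv (q i) (util xhat i) / (1 + q i (util xhat i)) ^ 2
              ≤ deriv (q i) 0 / (1 + q i 0) ^ 2 := this
            _ = deriv (q i) 0 := by rw [hq0 i]; norm_num
            _ ≤ H := hq0H i
        have h1 : cstar * util xstar i ≤ P i * util xstar i := by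
          nlinarith [(hustar i).1]
        have h2 : P i * util xhat i ≤ H * util xhat i := by
          nlinarith [(huhat i).1]
        rw [hutz]
        linarith
    calc cstar * ∑ i, util xstar i = ∑ i, cstar * util xstar i := Finset.mul_sum _ _ _
      _ ≤ ∑ i, (H * util xhat i - P i * util xhat i + P i * util xt i) :=
          Finset.sum_le_sum fun i _ => claim i
      _ = ∑ i, (H * util xhat i + P i * d i) := by
          refine Finset.sum_congr rfl fun i _ => ?_
          rw [hd]; ring
      _ = H * ∑ i, util xhat i + ∑ i, P i * d i := by
          rw [Finset.sum_add_distrib, Finset.mul_sum]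
      _ ≤ H * ∑ i, util xhat i := by linarith [hfoc]
  -- conclude
  have hhalf : L cstar / 2 = cstar / H := by
    rw [eq_div_iff hH.ne']
    linarith [hceq]
  rw [ge_iff_le, hhalf, div_mul_eq_mul_div, div_le_iff₀ hH]
  linarith [key]
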